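/- Let (P₁,P₂,P₃,P₄) be nonzero null vectors in ℂ^{n,1}, pairwise linearly independent, with normalized Gram matrix G. Then det G = (1/|X₂|²)·[−2·Re(X₁+X₂) − 2·Re(X₁·conj(X₂)·e^{−2i𝔸}) + |X₁|² + |X₂|² + 1], where X₁ = X(p₁,p₂,p₃,p₄), X₂ = X(p₁,p₃,p₂,p₄), and 𝔸 = 𝔸(p₁,p₂,p₃). -/

import Mathlib

open Complex Matrix
open scoped ComplexConjugate

noncomputable section

/-- The Hermitian form of signature `(n,1)` on `ℂ^{n+1}`:
`⟨Z,W⟩ = Z₁·conj W_{n+1} + Z₂·conj W₂ + ⋯ + Z_n·conj W_n + Z_{n+1}·conj W₁`. -/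
def herm {n : ℕ} (Z W : Fin (n + 1) → ℂ) : ℂ :=
  Z 0 * conj (W (Fin.last n)) + Z (Fin.last n) * conj (W 0) +
    ∑ i ∈ Finset.univ.filter (fun i : Fin (n + 1) => i ≠ 0 ∧ i ≠ Fin.last n),
      Z i * conj (W i)

lemma herm_conj {n : ℕ} (Z W : Fin (n + 1) → ℂ) : conj (herm Z W) = herm W Z := by
  simp only [herm, map_add, map_sum, _root_.map_mul, Complex.conj_conj]
  have hs : ∑ i ∈ Finset.univ.filter (fun i : Fin (n + 1) => i ≠ 0 ∧ i ≠ Fin.last n),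
      conj (Z i) * W i
      = ∑ i ∈ Finset.univ.filter (fun i : Fin (n + 1) => i ≠ 0 ∧ i ≠ Fin.last n),
      W i * conj (Z i) := Finset.sum_congr rfl fun i _ => mul_comm _ _
  rw [hs]; ring

lemma herm_add_left {n : ℕ} (Z Z' W : Fin (n + 1) → ℂ) :
    herm (Z + Z') W = herm Z W + herm Z' W := by
  simp only [herm, Pi.add_apply, add_mul]
  rw [Finset.sum_add_distrib]; ring

lemma herm_smul_left {n : ℕ} (t : ℂ) (Z W : Fin (n + 1) → ℂ) :
    herm (t • Z) W = t * herm Z W := by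
  simp only [herm, Pi.smul_apply, smul_eq_mul, mul_add, Finset.mul_sum, mul_assoc]

lemma herm_smul_right {n : ℕ} (t : ℂ) (Z W : Fin (n + 1) → ℂ) :
    herm Z (t • W) = conj t * herm Z W := by
  rw [← herm_conj (t • W) Z, herm_smul_left, _root_.map_mul, herm_conj]

lemma herm_add_right {n : ℕ} (Z W W' : Fin (n + 1) → ℂ) :
    herm Z (W + W') = herm Z W + herm Z W' := by
  rw [← herm_conj (W + W') Z, herm_add_left, map_add, herm_conj, herm_conj]

lemma herm_self_zero {n : ℕ} {Z : Fin (n + 1) → ℂ} (h : herm Z Z = 0)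
    (h0 : Z 0 = Z (Fin.last n)) : Z = 0 := by
  have key : herm Z Z = ((2 * Complex.normSq (Z 0) +
      ∑ i ∈ Finset.univ.filter (fun i : Fin (n + 1) => i ≠ 0 ∧ i ≠ Fin.last n),
        Complex.normSq (Z i) : ℝ) : ℂ) := by
    simp only [herm, ← h0, Complex.mul_conj]
    push_cast
    ring
  rw [h] at key
  have hreal : 2 * Complex.normSq (Z 0) +
      ∑ i ∈ Finset.univ.filter (fun i : Fin (n + 1) => i ≠ 0 ∧ i ≠ Fin.last n),
        Complex.normSq (Z i) = 0 := by exact_mod_cast key.symm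
  have hsum_nonneg : 0 ≤ ∑ i ∈ Finset.univ.filter
      (fun i : Fin (n + 1) => i ≠ 0 ∧ i ≠ Fin.last n), Complex.normSq (Z i) :=
    Finset.sum_nonneg fun i _ => Complex.normSq_nonneg _
  have h1 : Complex.normSq (Z 0) = 0 := by nlinarith [Complex.normSq_nonneg (Z 0)]
  have h2 : ∑ i ∈ Finset.univ.filter
      (fun i : Fin (n + 1) => i ≠ 0 ∧ i ≠ Fin.last n), Complex.normSq (Z i) = 0 := by
    linarith
  have hZ0 : Z 0 = 0 := Complex.normSq_eq_zero.mp h1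
  funext i
  by_cases hi0 : i = 0
  · simpa [hi0] using hZ0
  by_cases hil : i = Fin.last n
  · simp only [hil, Pi.zero_apply]; rw [← h0]; exact hZ0
  · have hmem : i ∈ Finset.univ.filter
        (fun i : Fin (n + 1) => i ≠ 0 ∧ i ≠ Fin.last n) := by simp [hi0, hil]
    have := (Finset.sum_eq_zero_iff_of_nonneg
      (fun i _ => Complex.normSq_nonneg (Z i))).mp h2 i hmem
    simpa using Complex.normSq_eq_zero.mp this

lemma herm_pair_ne {n : ℕ} {Z W : Fin (n + 1) → ℂ} (hZ : herm Z Z = 0)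
    (hW : herm W W = 0) (hind : LinearIndependent ℂ ![Z, W]) : herm Z W ≠ 0 := by
  intro h
  have hWZ : herm W Z = 0 := by rw [← herm_conj Z W, h, map_zero]
  set s : ℂ := W 0 - W (Fin.last n) with hs
  set t : ℂ := -(Z 0 - Z (Fin.last n)) with ht
  have hR : herm (s • Z + t • W) (s • Z + t • W) = 0 := by
    simp [herm_add_left, herm_add_right, herm_smul_left, herm_smul_right, hZ, hW, h, hWZ]
  have hR0 : (s • Z + t • W) 0 = (s • Z + t • W) (Fin.last n) := by
    simp only [Pi.add_apply, Pi.smul_apply, smul_eq_mul, hs, ht]; ring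
  have hR' : s • Z + t • W = 0 := herm_self_zero hR hR0
  have hst := LinearIndependent.pair_iff.mp hind s t hR'
  have hZ00 : Z 0 = Z (Fin.last n) := by
    have h2 := hst.2
    rw [ht, neg_eq_zero, sub_eq_zero] at h2
    exact h2
  have hZzero : Z = 0 := herm_self_zero hZ hZ00
  have := LinearIndependent.pair_iff.mp hind 1 0 (by simp [hZzero])
  exact one_ne_zero this.1

lemma det_fin_four' (M : Matrix (Fin 4) (Fin 4) ℂ) :
    M.det =
      M 0 0 * (M 1 1 * (M 2 2 * M 3 3 - M 2 3 * M 3 2)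
          - M 1 2 * (M 2 1 * M 3 3 - M 2 3 * M 3 1)
          + M 1 3 * (M 2 1 * M 3 2 - M 2 2 * M 3 1))
      - M 0 1 * (M 1 0 * (M 2 2 * M 3 3 - M 2 3 * M 3 2)
          - M 1 2 * (M 2 0 * M 3 3 - M 2 3 * M 3 0)
          + M 1 3 * (M 2 0 * M 3 2 - M 2 2 * M 3 0))
      + M 0 2 * (M 1 0 * (M 2 1 * M 3 3 - M 2 3 * M 3 1)
          - M 1 1 * (M 2 0 * M 3 3 - M 2 3 * M 3 0)
          + M 1 3 * (M 2 0 * M 3 1 - M 2 1 * M 3 0))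
      - M 0 3 * (M 1 0 * (M 2 1 * M 3 2 - M 2 2 * M 3 1)
          - M 1 1 * (M 2 0 * M 3 2 - M 2 2 * M 3 0)
          + M 1 2 * (M 2 0 * M 3 1 - M 2 1 * M 3 0)) := by
  rw [Matrix.det_succ_row_zero]
  simp [Fin.sum_univ_succ, Matrix.det_fin_three, Fin.succAbove]
  have e3 : (Fin.succ 2 : Fin 4) = 3 := rfl
  have e2 : ((Fin.castSucc 2 : Fin 4)) = 2 := rfl
  ring

lemma cast_rhs (X₁ X₂ E : ℂ) (h2 : X₂ ≠ 0) :
    (((-2 * (X₁ + X₂).re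
        - 2 * (X₁ * conj X₂ * E).re
        + ‖X₁‖ ^ 2 + ‖X₂‖ ^ 2 + 1) / ‖X₂‖ ^ 2 : ℝ) : ℂ)
    = (-(X₁ + conj X₁ + X₂ + conj X₂)
        - (X₁ * conj X₂ * E + conj X₁ * X₂ * conj E)
        + X₁ * conj X₁ + X₂ * conj X₂ + 1) / (X₂ * conj X₂) := by
  have e1 : X₁ + conj X₁ + X₂ + conj X₂ = (((X₁ + X₂).re * 2 : ℝ) : ℂ) := by
    have := Complex.add_conj (X₁ + X₂)
    push_cast at this ⊢
    simp only [map_add] at this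
    linear_combination this
  have e2 : X₁ * conj X₂ * E + conj X₁ * X₂ * conj E
      = (((X₁ * conj X₂ * E).re * 2 : ℝ) : ℂ) := by
    have := Complex.add_conj (X₁ * conj X₂ * E)
    simp only [_root_.map_mul, Complex.conj_conj] at this
    push_cast at this ⊢
    linear_combination this
  have e3 : ∀ z : ℂ, z * conj z = ((‖z‖ ^ 2 : ℝ) : ℂ) := by
    intro z; rw [Complex.mul_conj, Complex.sq_norm]
  rw [e1, e2, e3, e3]
  push_cast
  ring

set_option maxHeartbeats 1000000 in

/-- The Gram matrix of a quadruple of vectors. -/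
def gram {n : ℕ} (P : Fin 4 → Fin (n + 1) → ℂ) : Matrix (Fin 4) (Fin 4) ℂ :=
  fun i j => herm (P i) (P j)

/-- A quadruple of nonzero null vectors, pairwise linearly independent. -/
def IsNullQuadruple {n : ℕ} (P : Fin 4 → Fin (n + 1) → ℂ) : Prop :=
  (∀ i, P i ≠ 0) ∧ (∀ i, herm (P i) (P i) = 0) ∧
    ∀ i j, i ≠ j → LinearIndependent ℂ ![P i, P j]

/-- The Korányi–Reimann complex cross-ratio. -/
def crossRatio {n : ℕ} (P₁ P₂ P₃ P₄ : Fin (n + 1) → ℂ) : ℂ :=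
  (herm P₃ P₁ * herm P₄ P₂) / (herm P₄ P₁ * herm P₃ P₂)

/-- Cartan's angular invariant. -/
def cartan {n : ℕ} (P₁ P₂ P₃ : Fin (n + 1) → ℂ) : ℝ :=
  (-(herm P₁ P₂ * herm P₂ P₃ * herm P₃ P₁)).arg

/-- `G` is the normalized Gram matrix of the quadruple `P`. -/
def IsNormalizedGram {n : ℕ} (P : Fin 4 → Fin (n + 1) → ℂ)
    (G : Matrix (Fin 4) (Fin 4) ℂ) : Prop :=
  (∃ d : Fin 4 → ℂ, (∀ i, d i ≠ 0) ∧
      G = (Matrix.diagonal d)ᴴ * gram P * Matrix.diagonal d) ∧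
    G 0 1 = 1 ∧ G 1 2 = 1 ∧ G 2 3 = 1 ∧ ‖G 0 2‖ = 1

/-- Two quadruples are congruent if a linear map preserving the Hermitian form
sends one to the other up to nonzero scalars. -/
def CongruentQuad {n : ℕ} (P P' : Fin 4 → Fin (n + 1) → ℂ) : Prop :=
  ∃ A : (Fin (n + 1) → ℂ) →ₗ[ℂ] (Fin (n + 1) → ℂ),
    (∀ Z W, herm (A Z) (A W) = herm Z W) ∧
    ∃ lam : Fin 4 → ℂ, (∀ i, lam i ≠ 0) ∧ ∀ i, A (P i) = lam i • P' i

set_option maxHeartbeats 1000000 in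
/-- determinant of the normalized Gram matrix in terms of
`X₁, X₂, 𝔸`. -/
theorem stmt6 (n : ℕ) (P : Fin 4 → Fin (n + 1) → ℂ) (hP : IsNullQuadruple P)
    (G : Matrix (Fin 4) (Fin 4) ℂ) (hG : IsNormalizedGram P G)
    (X₁ X₂ : ℂ) (A : ℝ)
    (hX₁ : X₁ = crossRatio (P 0) (P 1) (P 2) (P 3))
    (hX₂ : X₂ = crossRatio (P 0) (P 2) (P 1) (P 3))
    (hA : A = cartan (P 0) (P 1) (P 2)) :
    G.det = (((-2 * (X₁ + X₂).re
        - 2 * (X₁ * conj X₂ * Complex.exp (-(2 * (A : ℂ) * Complex.I))).re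
        + ‖X₁‖ ^ 2 + ‖X₂‖ ^ 2 + 1) / ‖X₂‖ ^ 2 : ℝ) : ℂ) := by
  obtain ⟨⟨d, hd0, hGdef⟩, g01, g12, g23, g02abs⟩ := hG
  obtain ⟨hPne, hPnull, hPind⟩ := hP
  -- entries of G
  have hent : ∀ i j, G i j = conj (d i) * herm (P i) (P j) * d j := by
    intro i j
    rw [hGdef, Matrix.diagonal_conjTranspose]
    simp [Matrix.mul_diagonal, Matrix.diagonal_mul, _root_.gram, Complex.star_def, mul_assoc]
  have hcd : ∀ i, conj (d i) ≠ 0 := fun i => star_ne_zero.mpr (hd0 i)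
  have hne : ∀ i j, i ≠ j → herm (P i) (P j) ≠ 0 :=
    fun i j hij => herm_pair_ne (hPnull i) (hPnull j) (hPind i j hij)
  have hsym : ∀ i j, G j i = conj (G i j) := by
    intro i j
    rw [hent, hent, _root_.map_mul, _root_.map_mul, Complex.conj_conj, herm_conj]
    ring
  have hdiag : ∀ i, G i i = 0 := by
    intro i; rw [hent, hPnull i]; ring
  have hGne : ∀ i j, i ≠ j → G i j ≠ 0 := by
    intro i j hij
    rw [hent]
    exact mul_ne_zero (mul_ne_zero (hcd i) (hne i j hij)) (hd0 j)
  -- basic normalized entries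
  have h10 : G 1 0 = 1 := by rw [hsym 0 1, g01, _root_.map_one]
  have h21 : G 2 1 = 1 := by rw [hsym 1 2, g12, _root_.map_one]
  have h32 : G 3 2 = 1 := by rw [hsym 2 3, g23, _root_.map_one]
  -- cross ratios in terms of G
  have e1 : X₁ = G 2 0 * G 3 1 / (G 3 0 * G 2 1) := by
    rw [hX₁]
    unfold crossRatio
    rw [hent 2 0, hent 3 1, hent 3 0, hent 2 1]
    have h30 := hne 3 0 (by decide)
    have h21' := hne 2 1 (by decide)
    have k0 := hd0 0; have k1 := hd0 1
    have k2 := hcd 2; have k3 := hcd 3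
    field_simp
  have e2 : X₂ = G 1 0 * G 3 2 / (G 3 0 * G 1 2) := by
    rw [hX₂]
    unfold crossRatio
    rw [hent 1 0, hent 3 2, hent 3 0, hent 1 2]
    have h30 := hne 3 0 (by decide)
    have h12' := hne 1 2 (by decide)
    have k0 := hd0 0; have k2 := hd0 2
    have k1 := hcd 1; have k3 := hcd 3
    field_simp
  have hX1G : X₁ = conj (G 0 2) * conj (G 1 3) / conj (G 0 3) := by
    rw [e1, hsym 0 2, hsym 1 3, hsym 0 3, h21, mul_one]
  have hX2G : X₂ = 1 / conj (G 0 3) := by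
    rw [e2, h10, h32, hsym 0 3, g12, one_mul, mul_one]
  -- Cartan invariant
  have ha0 : G 0 2 ≠ 0 := by
    intro h; rw [h] at g02abs; simp at g02abs
  have ha1 : G 0 2 * conj (G 0 2) = 1 := by
    rw [Complex.mul_conj, Complex.normSq_eq_norm_sq, g02abs]; norm_num
  have hrpos : (0:ℝ) < Complex.normSq (d 0) * Complex.normSq (d 1) * Complex.normSq (d 2) :=
    mul_pos (mul_pos (Complex.normSq_pos.mpr (hd0 0)) (Complex.normSq_pos.mpr (hd0 1)))
      (Complex.normSq_pos.mpr (hd0 2))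
  have hp : -(G 2 0) = ((Complex.normSq (d 0) * Complex.normSq (d 1) * Complex.normSq (d 2) : ℝ) : ℂ)
      * (-(herm (P 0) (P 1) * herm (P 1) (P 2) * herm (P 2) (P 0))) := by
    have k01 : conj (d 0) * herm (P 0) (P 1) * d 1 = 1 := by rw [← hent 0 1]; exact g01
    have k12 : conj (d 1) * herm (P 1) (P 2) * d 2 = 1 := by rw [← hent 1 2]; exact g12
    have hm : ((Complex.normSq (d 0) * Complex.normSq (d 1) * Complex.normSq (d 2) : ℝ) : ℂ)
        * (-(herm (P 0) (P 1) * herm (P 1) (P 2) * herm (P 2) (P 0)))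
        = (conj (d 0) * herm (P 0) (P 1) * d 1) *
          ((conj (d 1) * herm (P 1) (P 2) * d 2) * (-(conj (d 2) * herm (P 2) (P 0) * d 0))) := by
      push_cast
      rw [← Complex.mul_conj, ← Complex.mul_conj, ← Complex.mul_conj]
      ring
    rw [hent 2 0, hm, k01, k12, one_mul, one_mul]
  have hargA : (-(G 2 0)).arg = A := by
    rw [hp, Complex.arg_real_mul _ hrpos, hA]; rfl
  have habsneg : ‖(-(G 2 0))‖ = 1 := by
    rw [hsym 0 2]
    rw [norm_neg, Complex.norm_conj]
    exact g02abs
  have hexpA : Complex.exp (↑A * Complex.I) = -(G 2 0) := by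
    have h := Complex.norm_mul_exp_arg_mul_I (-(G 2 0))
    rw [habsneg, hargA] at h
    simpa using h
  have hE : Complex.exp (-(2 * (A:ℂ) * Complex.I)) = G 0 2 * G 0 2 := by
    have h1 : Complex.exp (-(2 * (A:ℂ) * Complex.I))
        = (Complex.exp (↑A * Complex.I) * Complex.exp (↑A * Complex.I))⁻¹ := by
      rw [← Complex.exp_add, ← Complex.exp_neg]; ring_nf
    rw [h1, hexpA, hsym 0 2, neg_mul_neg, mul_inv]
    have hinv : (conj (G 0 2))⁻¹ = G 0 2 := inv_eq_of_mul_eq_one_left ha1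
    rw [hinv]
  -- nonvanishing
  have hb : G 0 3 ≠ 0 := hGne 0 3 (by decide)
  have hcb : conj (G 0 3) ≠ 0 := by
    intro h
    apply hb
    have h2 := congrArg (starRingEnd ℂ) h
    simpa using h2
  have hX2ne : X₂ ≠ 0 := by
    rw [hX2G]
    exact one_div_ne_zero hcb
  -- conjugated cross-ratios
  have hcX1 : conj X₁ = G 0 2 * G 1 3 / G 0 3 := by
    rw [hX1G, map_div₀, _root_.map_mul, Complex.conj_conj, Complex.conj_conj, Complex.conj_conj]
  have hcX2 : conj X₂ = 1 / G 0 3 := by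
    rw [hX2G, map_div₀, _root_.map_one, Complex.conj_conj]
  have hcX2ne : conj X₂ ≠ 0 := by rw [hcX2]; exact one_div_ne_zero hb
  have hden : X₂ * conj X₂ ≠ 0 := mul_ne_zero hX2ne hcX2ne
  have m2 : X₂ * conj (G 0 3) = 1 := by rw [hX2G]; field_simp
  have m4 : conj X₂ * G 0 3 = 1 := by rw [hcX2]; field_simp
  have hX1p : X₁ = conj (G 0 2) * conj (G 1 3) * X₂ := by
    rw [hX1G, hX2G]; ring
  have hcX1p : conj X₁ = G 0 2 * G 1 3 * conj X₂ := by
    rw [hcX1, hcX2]; ring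
  -- the matrix
  have hGM : G = !![0, 1, G 0 2, G 0 3; 1, 0, 1, G 1 3;
      conj (G 0 2), 1, 0, 1; conj (G 0 3), conj (G 1 3), 1, 0] := by
    ext i j
    fin_cases i <;> fin_cases j <;>
      simp [hdiag 0, hdiag 1, hdiag 2, hdiag 3, g01, g12, g23, h10, h21, h32,
        hsym 0 2, hsym 0 3, hsym 1 3]
  rw [hGM, det_fin_four', cast_rhs X₁ X₂ _ hX2ne, hE]
  simp only [_root_.map_mul]
  rw [eq_div_iff hden, hcX1p, hX1p]
  norm_num [Matrix.cons_val_zero, Matrix.cons_val_one, Matrix.cons_val_two, Matrix.cons_val_three,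
    Matrix.vecHead, Matrix.vecTail]
  linear_combination (conj X₂ * (-1 + G 0 3 - G 0 2 * G 1 3)) * m2
    + (1 - X₂ - X₂ * conj (G 0 2) * conj (G 1 3)) * m4
    + (X₂ * conj X₂ * (conj (G 0 2) * G 1 3 + G 0 2 * conj (G 1 3))) * ha1
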